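/- For fixed p ∈ (0,1), Tie(k,p) → 0 as k → ∞. -/

import Mathlib

/-- Probability that two i.i.d. binomial(k,p) random variables are equal. -/
noncomputable def Tie (k : ℕ) (p : ℝ) : ℝ :=
  ∑ j ∈ Finset.range (k+1), ((k.choose j : ℝ) * p ^ j * (1 - p) ^ (k - j))^2

namespace TieAux

open Finset Filter

/-- Binomial pmf. -/
noncomputable def b (p : ℝ) (k j : ℕ) : ℝ := (k.choose j : ℝ) * p ^ j * (1 - p) ^ (k - j)

/-- Shifted binomial pmf: `d p k j = b p k (j-1)`, with `d p k 0 = 0`. -/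
noncomputable def d (p : ℝ) (k j : ℕ) : ℝ := if j = 0 then 0 else b p k (j - 1)

lemma tie_eq (k : ℕ) (p : ℝ) : Tie k p = ∑ j ∈ Finset.range (k+1), (b p k j)^2 := rfl

lemma b_nonneg {p : ℝ} (h0 : 0 ≤ p) (h1 : p ≤ 1) (k j : ℕ) : 0 ≤ b p k j := by
  have hq : (0:ℝ) ≤ 1 - p := by linarith
  unfold b; positivity

lemma b_zero_of_gt {p : ℝ} {k j : ℕ} (h : k < j) : b p k j = 0 := by
  simp [b, Nat.choose_eq_zero_of_lt h]

lemma sum_b {p : ℝ} (k : ℕ) : ∑ j ∈ range (k+1), b p k j = 1 := by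
  have h := add_pow p (1 - p) k
  have hpq : p + (1 - p) = (1:ℝ) := by ring
  rw [hpq, one_pow] at h
  rw [h]
  apply Finset.sum_congr rfl
  intro j hj
  unfold b
  ring

lemma pascal (p : ℝ) (k j : ℕ) : b p (k+1) j = (1 - p) * b p k j + p * d p k j := by
  rcases j with _ | i
  · simp only [d, if_pos rfl, mul_zero, add_zero]
    simp [b, pow_succ]
    ring
  · have hd : d p k (i+1) = b p k i := by simp [d]
    rw [hd]
    rcases lt_or_ge i k with h | h
    · unfold b
      rw [Nat.choose_succ_succ]
      have h1 : k + 1 - (i+1) = (k - (i+1)) + 1 := by omega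
      have h2 : k - i = (k - (i+1)) + 1 := by omega
      rw [h1, h2]
      push_cast
      ring
    · rcases eq_or_lt_of_le h with rfl | h'
      · unfold b
        rw [Nat.choose_succ_succ, Nat.choose_self, Nat.choose_succ_self]
        simp
        ring
      · rw [b_zero_of_gt (by omega), b_zero_of_gt (by omega), b_zero_of_gt (by omega)]
        ring

lemma telescope (p : ℝ) (k : ℕ) : ∀ n, ∑ j ∈ range (n+1), (b p k j - d p k j) = b p k n := by
  intro n
  induction n with
  | zero => simp [d]
  | succ m ih =>
    have hd : d p k (m+1) = b p k m := by simp [d]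
    rw [Finset.sum_range_succ, ih, hd]
    ring

lemma tie_succ (p : ℝ) (k : ℕ) :
    Tie (k+1) p = Tie k p - p * (1-p) * ∑ j ∈ range (k+2), (b p k j - d p k j)^2 := by
  have key : ∀ j ∈ range (k+2),
      (b p (k+1) j)^2 + p*(1-p)*(b p k j - d p k j)^2
        = (1-p) * (b p k j)^2 + p * (d p k j)^2 := by
    intro j _
    rw [pascal p k j]
    ring
  have hsum : ∑ j ∈ range (k+2), ((b p (k+1) j)^2 + p*(1-p)*(b p k j - d p k j)^2)
      = ∑ j ∈ range (k+2), ((1-p) * (b p k j)^2 + p * (d p k j)^2) :=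
    Finset.sum_congr rfl key
  rw [Finset.sum_add_distrib, ← Finset.mul_sum] at hsum
  have hb : ∑ j ∈ range (k+2), (b p (k+1) j)^2 = Tie (k+1) p := (tie_eq (k+1) p).symm
  have hb2 : ∑ j ∈ range (k+2), (b p k j)^2 = Tie k p := by
    rw [Finset.sum_range_succ, b_zero_of_gt (Nat.lt_succ_self k)]
    simp [tie_eq]
  have hd2 : ∑ j ∈ range (k+2), (d p k j)^2 = Tie k p := by
    rw [Finset.sum_range_succ']
    simp only [d, Nat.succ_ne_zero, if_neg, Nat.add_sub_cancel, if_pos rfl]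
    simp [tie_eq]
  rw [hb, Finset.sum_add_distrib, ← Finset.mul_sum, ← Finset.mul_sum, hb2, hd2] at hsum
  linarith

lemma tie_nonneg {p : ℝ} (k : ℕ) : 0 ≤ Tie k p := by
  rw [tie_eq]
  exact Finset.sum_nonneg fun j _ => sq_nonneg _

lemma tie_le_max {p : ℝ} (h0 : 0 ≤ p) (h1 : p ≤ 1) (k : ℕ) {m : ℕ}
    (hm : ∀ j ∈ range (k+1), b p k j ≤ b p k m) : Tie k p ≤ b p k m := by
  have : Tie k p ≤ ∑ j ∈ range (k+1), b p k m * b p k j := by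
    rw [tie_eq]
    apply Finset.sum_le_sum
    intro j hj
    rw [sq]
    exact mul_le_mul_of_nonneg_right (hm j hj) (b_nonneg h0 h1 k j)
  rwa [← Finset.mul_sum, sum_b, mul_one] at this

lemma tie_ineq {p : ℝ} (h0 : 0 < p) (h1 : p < 1) (k : ℕ) :
    Tie (k+1) p ≤ Tie k p - 4 * p * (1-p) * (Tie k p)^2 / ((k:ℝ)+2) := by
  obtain ⟨m, hmmem, hmax⟩ := Finset.exists_max_image (range (k+1)) (b p k) ⟨0, by simp⟩
  have hmle : m ≤ k := Nat.lt_succ_iff.mp (Finset.mem_range.mp hmmem)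
  have hTm : Tie k p ≤ b p k m := tie_le_max h0.le h1.le k hmax
  -- total variation bound : 2 * b p k m ≤ ∑ |b - d|
  have htel1 : b p k m ≤ ∑ j ∈ range (m+1), |b p k j - d p k j| := by
    rw [← telescope p k m]
    exact Finset.sum_le_sum fun j _ => le_abs_self _
  have htot : ∑ j ∈ range (k+2), (b p k j - d p k j) = 0 := by
    rw [telescope p k (k+1), b_zero_of_gt (Nat.lt_succ_self k)]
  have htel2 : b p k m ≤ ∑ j ∈ Ico (m+1) (k+2), |b p k j - d p k j| := by
    have hsplit : ∑ j ∈ range (m+1), (b p k j - d p k j)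
        + ∑ j ∈ Ico (m+1) (k+2), (b p k j - d p k j)
        = ∑ j ∈ range (k+2), (b p k j - d p k j) := by
      rw [Finset.range_eq_Ico, Finset.range_eq_Ico]
      exact Finset.sum_Ico_consecutive _ (Nat.zero_le _) (by omega)
    have h2 : ∑ j ∈ Ico (m+1) (k+2), (b p k j - d p k j) = - b p k m := by
      rw [telescope p k m] at hsplit
      rw [htot] at hsplit
      linarith
    calc b p k m = -∑ j ∈ Ico (m+1) (k+2), (b p k j - d p k j) := by rw [h2]; ring
      _ = ∑ j ∈ Ico (m+1) (k+2), -(b p k j - d p k j) := by rw [Finset.sum_neg_distrib]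
      _ ≤ ∑ j ∈ Ico (m+1) (k+2), |b p k j - d p k j| :=
          Finset.sum_le_sum fun j _ => neg_le_abs _
  have hA : 2 * b p k m ≤ ∑ j ∈ range (k+2), |b p k j - d p k j| := by
    have hsplit : ∑ j ∈ range (m+1), |b p k j - d p k j|
        + ∑ j ∈ Ico (m+1) (k+2), |b p k j - d p k j|
        = ∑ j ∈ range (k+2), |b p k j - d p k j| := by
      rw [Finset.range_eq_Ico, Finset.range_eq_Ico]
      exact Finset.sum_Ico_consecutive _ (Nat.zero_le _) (by omega)
    linarith
  -- Cauchy–Schwarz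
  have hCS : (∑ j ∈ range (k+2), |b p k j - d p k j|)^2
      ≤ ((k:ℝ)+2) * ∑ j ∈ range (k+2), (b p k j - d p k j)^2 := by
    have := sq_sum_le_card_mul_sum_sq (s := range (k+2)) (f := fun j => |b p k j - d p k j|)
    simp only [Finset.card_range, sq_abs] at this
    exact_mod_cast this
  have hbm0 : 0 ≤ b p k m := b_nonneg h0.le h1.le k m
  have hk2 : (0:ℝ) < (k:ℝ) + 2 := by positivity
  have hsq : 4 * (Tie k p)^2 ≤ ((k:ℝ)+2) * ∑ j ∈ range (k+2), (b p k j - d p k j)^2 := by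
    have h4 : 4 * (Tie k p)^2 ≤ (2 * b p k m)^2 := by nlinarith [tie_nonneg (p := p) k]
    have h5 : (2 * b p k m)^2 ≤ (∑ j ∈ range (k+2), |b p k j - d p k j|)^2 := by
      apply sq_le_sq'
      · nlinarith
      · exact hA
    linarith
  have hfinal : 4 * (Tie k p)^2 / ((k:ℝ)+2) ≤ ∑ j ∈ range (k+2), (b p k j - d p k j)^2 := by
    rw [div_le_iff₀ hk2]
    linarith
  have hrec := tie_succ p k
  have hpq : 0 < p * (1-p) := by nlinarith
  have : p * (1-p) * (4 * (Tie k p)^2 / ((k:ℝ)+2))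
      ≤ p * (1-p) * ∑ j ∈ range (k+2), (b p k j - d p k j)^2 :=
    mul_le_mul_of_nonneg_left hfinal hpq.le
  rw [hrec]
  have heq : 4 * p * (1-p) * (Tie k p)^2 / ((k:ℝ)+2)
      = p * (1-p) * (4 * (Tie k p)^2 / ((k:ℝ)+2)) := by ring
  linarith [heq ▸ this]

end TieAux

theorem stmt_4 (p : ℝ) (hp : p ∈ Set.Ioo (0:ℝ) 1) :
    Filter.Tendsto (fun k => Tie k p) Filter.atTop (nhds 0) := by
  obtain ⟨h0, h1⟩ := hp
  have hpq : 0 < 4 * p * (1-p) := by nlinarith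
  have anti : Antitone (fun k => Tie k p) := by
    apply antitone_nat_of_succ_le
    intro k
    have h := TieAux.tie_ineq h0 h1 k
    have hk2 : (0:ℝ) < (k:ℝ) + 2 := by positivity
    have : 0 ≤ 4 * p * (1-p) * (Tie k p)^2 / ((k:ℝ)+2) := by positivity
    linarith
  have hbdd : BddBelow (Set.range fun k => Tie k p) := by
    refine ⟨0, ?_⟩
    rintro x ⟨k, rfl⟩
    exact TieAux.tie_nonneg k
  have hlim := tendsto_atTop_ciInf anti hbdd
  set L := ⨅ k, Tie k p with hL
  have hL0 : 0 ≤ L := le_ciInf fun k => TieAux.tie_nonneg k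
  have hLle : ∀ k, L ≤ Tie k p := fun k => ciInf_le hbdd k
  rcases eq_or_lt_of_le hL0 with h | h
  · rwa [← h] at hlim
  · exfalso
    have key : ∀ n, Tie n p ≤ Tie 0 p - 4 * p * (1-p) * L^2 * ∑ k ∈ Finset.range n, 1/((k:ℝ)+2) := by
      intro n
      induction n with
      | zero => simp
      | succ n ih =>
        have hineq := TieAux.tie_ineq h0 h1 n
        have hk2 : (0:ℝ) < (n:ℝ) + 2 := by positivity
        have hmono : 4 * p * (1-p) * L^2 / ((n:ℝ)+2)
            ≤ 4 * p * (1-p) * (Tie n p)^2 / ((n:ℝ)+2) := by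
          gcongr
          nlinarith [hLle n]
        rw [Finset.sum_range_succ]
        have : 4 * p * (1-p) * L^2 * (1/((n:ℝ)+2)) = 4 * p * (1-p) * L^2 / ((n:ℝ)+2) := by ring
        nlinarith
    have hdiv : Filter.Tendsto (fun n => ∑ k ∈ Finset.range n, 1/((k:ℝ)+2)) Filter.atTop Filter.atTop := by
      have hbase := Real.tendsto_sum_range_one_div_nat_succ_atTop
      have hhalf : Filter.Tendsto (fun n => (1/2) * ∑ i ∈ Finset.range n, 1/((i:ℝ)+1)) Filter.atTop Filter.atTop :=
        hbase.const_mul_atTop (by norm_num)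
      apply Filter.tendsto_atTop_mono _ hhalf
      intro n
      rw [Finset.mul_sum]
      apply Finset.sum_le_sum
      intro i _
      have hi : (0:ℝ) ≤ i := Nat.cast_nonneg i
      rw [mul_one_div, div_le_div_iff₀ (by positivity) (by positivity)]
      linarith
    have hcL : 0 < 4 * p * (1-p) * L^2 := by positivity
    obtain ⟨n, hn⟩ := (hdiv.eventually_ge_atTop ((Tie 0 p + 1) / (4 * p * (1-p) * L^2))).exists
    have : Tie 0 p + 1 ≤ 4 * p * (1-p) * L^2 * ∑ k ∈ Finset.range n, 1/((k:ℝ)+2) := by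
      rw [div_le_iff₀ hcL] at hn
      linarith [hn]
    have hkey := key n
    have := TieAux.tie_nonneg (p := p) n
    linarith
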